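/- Inverse Laplace transform identity: for real ν > 0 and a > 0, the function s ↦ s^{-ν} exp(a/s) (defined for s > 0) is the Laplace transform of t ↦ (t/a)^{(ν-1)/2} I_{ν-1}(2√(a t)), i.e., ∫₀^∞ e^{-s t} (t/a)^{(ν-1)/2} I_{ν-1}(2√(a t)) dt = s^{-ν} e^{a/s} for all s > 0. -/

import Mathlib

open MeasureTheory Set

/-- Modified Bessel function of the first kind, via its power series
`I_ν(x) = Σ_{m=0}^∞ (x/2)^{2m+ν} / (m! Γ(m+ν+1))` (for `x > 0`). -/
noncomputable def besselI (ν x : ℝ) : ℝ :=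
  ∑' m : ℕ, (x / 2) ^ (2 * (m : ℝ) + ν) / (Nat.factorial m * Real.Gamma (m + ν + 1))

/-- Inverse Laplace transform identity (Abramowitz–Stegun 29.3.81): for `ν, a > 0`,
`∫₀^∞ e^{-s t} (t/a)^{(ν-1)/2} I_{ν-1}(2√(a t)) dt = s^{-ν} e^{a/s}` for all `s > 0`. -/
theorem laplace_besselI_identity (ν a : ℝ) (hν : 0 < ν) (ha : 0 < a) :
    ∀ s : ℝ, 0 < s →
      ∫ t in Ioi (0:ℝ),
          Real.exp (-s * t) * (t / a) ^ ((ν - 1) / 2) * besselI (ν - 1) (2 * Real.sqrt (a * t)) =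
        s ^ (-ν) * Real.exp (a / s) := by
  intro s hs
  have hΓpos : ∀ m : ℕ, 0 < Real.Gamma ((m : ℝ) + ν) := fun m =>
    Real.Gamma_pos_of_pos (by positivity)
  set c : ℕ → ℝ := fun m => a ^ m / (Nat.factorial m * Real.Gamma ((m : ℝ) + ν)) with hc_def
  have hc : ∀ m, 0 < c m := fun m => by
    have := hΓpos m
    have : (0:ℝ) < Nat.factorial m := by positivity
    unfold c
    positivity
  set F : ℕ → ℝ → ℝ := fun m t => c m * (t ^ ((m : ℝ) + ν - 1) * Real.exp (-(s * t))) with hF_def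
  -- pointwise identity on Ioi 0
  have hpt : EqOn (fun t : ℝ =>
      Real.exp (-s * t) * (t / a) ^ ((ν - 1) / 2) * besselI (ν - 1) (2 * Real.sqrt (a * t)))
      (fun t => ∑' m, F m t) (Ioi 0) := by
    intro t ht
    have ht0 : (0:ℝ) < t := ht
    simp only [besselI]
    rw [← tsum_mul_left]
    refine tsum_congr fun m => ?_
    have h2 : 2 * Real.sqrt (a * t) / 2 = Real.sqrt (a * t) := by ring
    have h3 : (Real.sqrt (a * t)) ^ (2 * (m:ℝ) + (ν - 1)) =
        a ^ ((m:ℝ) + (ν - 1) / 2) * t ^ ((m:ℝ) + (ν - 1) / 2) := by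
      rw [Real.sqrt_eq_rpow, ← Real.rpow_mul (by positivity),
        show (1/2 : ℝ) * (2 * (m:ℝ) + (ν - 1)) = (m:ℝ) + (ν - 1) / 2 by ring,
        Real.mul_rpow ha.le ht0.le]
    have h4 : (t / a) ^ ((ν - 1) / 2) = t ^ ((ν - 1) / 2) * a ^ (-((ν - 1) / 2)) := by
      rw [div_eq_mul_inv, Real.mul_rpow ht0.le (by positivity), Real.inv_rpow ha.le,
        ← Real.rpow_neg ha.le]
    have hΓarg : ((m:ℝ) + (ν - 1) + 1) = (m:ℝ) + ν := by ring
    rw [h2, h3, h4, hΓarg]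
    have ha1 : a ^ (-((ν - 1) / 2)) * a ^ ((m:ℝ) + (ν - 1) / 2) = a ^ m := by
      rw [← Real.rpow_add ha, show -((ν - 1) / 2) + ((m:ℝ) + (ν - 1) / 2) = (m:ℝ) by ring,
        Real.rpow_natCast]
    have ht1 : t ^ ((ν - 1) / 2) * t ^ ((m:ℝ) + (ν - 1) / 2) = t ^ ((m:ℝ) + ν - 1) := by
      rw [← Real.rpow_add ht0, show (ν - 1) / 2 + ((m:ℝ) + (ν - 1) / 2) = (m:ℝ) + ν - 1 by ring]
    have hfac : (Nat.factorial m : ℝ) ≠ 0 := by positivity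
    have hΓ : Real.Gamma ((m:ℝ) + ν) ≠ 0 := (hΓpos m).ne'
    simp only [hF_def, hc_def, neg_mul]
    calc Real.exp (-(s * t)) * (t ^ ((ν - 1) / 2) * a ^ (-((ν - 1) / 2))) *
          (a ^ ((m:ℝ) + (ν - 1) / 2) * t ^ ((m:ℝ) + (ν - 1) / 2) /
            (Nat.factorial m * Real.Gamma ((m:ℝ) + ν)))
        = (a ^ (-((ν - 1) / 2)) * a ^ ((m:ℝ) + (ν - 1) / 2)) *
            ((t ^ ((ν - 1) / 2) * t ^ ((m:ℝ) + (ν - 1) / 2)) * Real.exp (-(s * t))) /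
            (Nat.factorial m * Real.Gamma ((m:ℝ) + ν)) := by ring
      _ = a ^ m * (t ^ ((m:ℝ) + ν - 1) * Real.exp (-(s * t))) /
            (Nat.factorial m * Real.Gamma ((m:ℝ) + ν)) := by rw [ha1, ht1]
      _ = a ^ m / (Nat.factorial m * Real.Gamma ((m:ℝ) + ν)) *
            (t ^ ((m:ℝ) + ν - 1) * Real.exp (-(s * t))) := by ring
  -- integrability
  have hint : ∀ m, IntegrableOn (F m) (Ioi 0) := by
    intro m
    apply Integrable.const_mul
    have := integrableOn_rpow_mul_exp_neg_mul_rpow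
      (s := (m:ℝ) + ν - 1) (p := 1) (b := s) (by { have : (0:ℝ) ≤ (m:ℝ) := Nat.cast_nonneg m; linarith }) one_pos hs
    simpa [Real.rpow_one, IntegrableOn] using this
  -- value of each integral
  have hval : ∀ m, ∫ t in Ioi (0:ℝ), F m t = a ^ m / Nat.factorial m * s ^ (-((m:ℝ) + ν)) := by
    intro m
    rw [hF_def]
    simp only
    rw [MeasureTheory.integral_const_mul,
      show (fun t : ℝ => t ^ ((m:ℝ) + ν - 1) * Real.exp (-(s * t))) =
        fun t : ℝ => t ^ (((m:ℝ) + ν) - 1) * Real.exp (-(s * t)) from rfl,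
      Real.integral_rpow_mul_exp_neg_mul_Ioi (by positivity) hs]
    have h1 : ((1:ℝ) / s) ^ ((m:ℝ) + ν) = s ^ (-((m:ℝ) + ν)) := by
      rw [one_div, Real.inv_rpow hs.le, ← Real.rpow_neg hs.le]
    rw [h1, hc_def]
    have hΓ : Real.Gamma ((m:ℝ) + ν) ≠ 0 := (hΓpos m).ne'
    have hfac : (Nat.factorial m : ℝ) ≠ 0 := by positivity
    field_simp
  -- rewriting each term
  have hterm : ∀ m : ℕ, a ^ m / Nat.factorial m * s ^ (-((m:ℝ) + ν)) =
      s ^ (-ν) * ((a / s) ^ m / Nat.factorial m) := by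
    intro m
    rw [neg_add, Real.rpow_add hs, Real.rpow_neg hs.le, Real.rpow_natCast, div_pow]
    have hsm : (s:ℝ) ^ m ≠ 0 := pow_ne_zero _ hs.ne'
    have hfac : (Nat.factorial m : ℝ) ≠ 0 := by positivity
    field_simp
  -- summability of integrals of norms
  have hnorm : ∀ m, ∫ t in Ioi (0:ℝ), ‖F m t‖ = ∫ t in Ioi (0:ℝ), F m t := by
    intro m
    refine setIntegral_congr_fun measurableSet_Ioi fun t ht => ?_
    exact Real.norm_of_nonneg (mul_nonneg (hc m).le
      (mul_nonneg (Real.rpow_nonneg (le_of_lt ht) _) (Real.exp_pos _).le))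
  have hsum : Summable fun m => ∫ t in Ioi (0:ℝ), ‖F m t‖ := by
    simp_rw [hnorm, hval, hterm]
    exact (Real.summable_pow_div_factorial (a / s)).mul_left _
  rw [setIntegral_congr_fun measurableSet_Ioi hpt,
    ← MeasureTheory.integral_tsum_of_summable_integral_norm hint hsum]
  calc ∑' m, ∫ t in Ioi (0:ℝ), F m t
      = ∑' m : ℕ, s ^ (-ν) * ((a / s) ^ m / Nat.factorial m) := by
        refine tsum_congr fun m => ?_
        rw [hval, hterm]
    _ = s ^ (-ν) * ∑' m : ℕ, (a / s) ^ m / Nat.factorial m := tsum_mul_left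
    _ = s ^ (-ν) * Real.exp (a / s) := by
        congr 1
        rw [Real.exp_eq_exp_ℝ, NormedSpace.exp_eq_tsum_div]
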